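/- Let V₁, V₂, V₃, V₄ ∈ ℝ² with A + Γ − B ≠ 0, and suppose (s₁,t₁) and (s₂,t₂) are points of (0,1) × (0,1) with G(s₁,t₁) = G(s₂,t₂) = (0,0) and t₁ ≠ t₂. For j = 1, 2, let pⱼ, qⱼ > 0 and let Mⱼ be the real 2×2 matrix whose first column is pⱼ·u(sⱼ,tⱼ) and whose second column is qⱼ·v(sⱼ,tⱼ) (the linearization of the layer problem of the regularized system at the corresponding equilibrium, for an arbitrary choice of regularization functions). Then it is not the case that both M₁ and M₂ have all eigenvalues with negative real part; i.e., there exists at most one stable (attracting) sliding vector field on the codimension-2 discontinuity Λ. -/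

import Mathlib

/-- Determinant of two vectors in ℝ². -/
noncomputable def det2 (U W : ℝ × ℝ) : ℝ := U.1 * W.2 - U.2 * W.1

/-- The canopy bilinear map G(s,t) = st·V₁ + (1-s)t·V₂ + (1-s)(1-t)·V₃ + s(1-t)·V₄. -/
noncomputable def Gmap (V₁ V₂ V₃ V₄ : ℝ × ℝ) (s t : ℝ) : ℝ × ℝ :=
  (s * t) • V₁ + ((1 - s) * t) • V₂ + ((1 - s) * (1 - t)) • V₃ + (s * (1 - t)) • V₄

/-- ∂G/∂s = t·(V₁-V₂) + (1-t)·(V₄-V₃). -/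
noncomputable def uvec (V₁ V₂ V₃ V₄ : ℝ × ℝ) (t : ℝ) : ℝ × ℝ :=
  t • (V₁ - V₂) + (1 - t) • (V₄ - V₃)

/-- ∂G/∂t = s·(V₁-V₄) + (1-s)·(V₂-V₃). -/
noncomputable def vvec (V₁ V₂ V₃ V₄ : ℝ × ℝ) (s : ℝ) : ℝ × ℝ :=
  s • (V₁ - V₄) + (1 - s) • (V₂ - V₃)

/-- A real 2×2 matrix has all eigenvalues with negative real part: every complex root
of its characteristic polynomial has negative real part. -/
def AllEigRealPartNeg (M : Matrix (Fin 2) (Fin 2) ℝ) : Prop :=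
  ∀ z : ℂ, (Polynomial.aeval z) M.charpoly = 0 → z.re < 0

lemma pos_aux (p q X Y Z W : ℝ) (hp : 0 < p) (hq : 0 < q)
    (h : 0 < p * X * (q * W) - q * Y * (p * Z)) : 0 < X * W - Z * Y := by
  have hpq : 0 < p * q := mul_pos hp hq
  nlinarith

open Polynomial in
lemma detpos_of_alleigneg (M : Matrix (Fin 2) (Fin 2) ℝ)
    (h : AllEigRealPartNeg M) : 0 < M.det := by
  by_contra hd
  push_neg at hd
  set a := M 0 0; set b := M 0 1; set c := M 1 0; set d := M 1 1
  have hdet : M.det = a * d - b * c := Matrix.det_fin_two M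
  have hcp : M.charpoly = (X - C a) * (X - C d) - C b * C c := by
    rw [Matrix.charpoly, Matrix.det_fin_two]
    simp [Matrix.charmatrix_apply_eq, Matrix.charmatrix_apply_ne]
    rfl
  set D : ℝ := (a + d) ^ 2 - 4 * M.det with hD
  have hD0 : 0 ≤ D := by nlinarith
  have hsq : Real.sqrt D ^ 2 = D := Real.sq_sqrt hD0
  have habs : |a + d| ≤ Real.sqrt D := by
    have h1 : (a+d)^2 ≤ D := by nlinarith
    calc |a+d| = Real.sqrt ((a+d)^2) := (Real.sqrt_sq_eq_abs _).symm
    _ ≤ Real.sqrt D := Real.sqrt_le_sqrt h1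
  set r : ℝ := ((a + d) + Real.sqrt D) / 2 with hr
  have hroot : (Polynomial.aeval (r : ℂ)) M.charpoly = 0 := by
    rw [hcp]
    simp only [map_sub, map_mul, Polynomial.aeval_X, Polynomial.aeval_C,
      Complex.coe_algebraMap]
    have : ((r : ℂ) - a) * ((r : ℂ) - d) - b * c = ((r - a) * (r - d) - b * c : ℝ) := by
      push_cast; ring
    rw [this]
    norm_cast
    have : (r - a) * (r - d) - b * c = 0 := by
      rw [hr]
      nlinarith [hsq, hdet]
    simp [this]
  have hlt := h _ hroot
  rw [Complex.ofReal_re] at hlt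
  have h0 : 0 ≤ r := by
    rw [hr]
    have := neg_abs_le (a+d)
    linarith
  linarith

theorem stmt17 (V₁ V₂ V₃ V₄ : ℝ × ℝ) (A B Γ : ℝ)
    (hA : A = det2 V₁ V₂) (hB : B = det2 V₄ V₂ + det2 V₁ V₃) (hΓ : Γ = det2 V₄ V₃)
    (hABΓ : A + Γ - B ≠ 0)
    (s₁ t₁ s₂ t₂ : ℝ)
    (hs₁ : s₁ ∈ Set.Ioo (0 : ℝ) 1) (ht₁ : t₁ ∈ Set.Ioo (0 : ℝ) 1)
    (hs₂ : s₂ ∈ Set.Ioo (0 : ℝ) 1) (ht₂ : t₂ ∈ Set.Ioo (0 : ℝ) 1)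
    (hG₁ : Gmap V₁ V₂ V₃ V₄ s₁ t₁ = 0) (hG₂ : Gmap V₁ V₂ V₃ V₄ s₂ t₂ = 0)
    (htt : t₁ ≠ t₂)
    (p₁ q₁ p₂ q₂ : ℝ) (hp₁ : 0 < p₁) (hq₁ : 0 < q₁) (hp₂ : 0 < p₂) (hq₂ : 0 < q₂)
    (M₁ M₂ : Matrix (Fin 2) (Fin 2) ℝ)
    (hM₁ : M₁ = !![p₁ * (uvec V₁ V₂ V₃ V₄ t₁).1, q₁ * (vvec V₁ V₂ V₃ V₄ s₁).1;
                   p₁ * (uvec V₁ V₂ V₃ V₄ t₁).2, q₁ * (vvec V₁ V₂ V₃ V₄ s₁).2])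
    (hM₂ : M₂ = !![p₂ * (uvec V₁ V₂ V₃ V₄ t₂).1, q₂ * (vvec V₁ V₂ V₃ V₄ s₂).1;
                   p₂ * (uvec V₁ V₂ V₃ V₄ t₂).2, q₂ * (vvec V₁ V₂ V₃ V₄ s₂).2]) :
    ¬(AllEigRealPartNeg M₁ ∧ AllEigRealPartNeg M₂) := by
  obtain ⟨a₁, b₁⟩ := V₁
  obtain ⟨a₂, b₂⟩ := V₂
  obtain ⟨a₃, b₃⟩ := V₃
  obtain ⟨a₄, b₄⟩ := V₄
  simp only [det2] at hA hB hΓ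
  obtain ⟨hs₁0, hs₁1⟩ := hs₁
  obtain ⟨hs₂0, hs₂1⟩ := hs₂
  -- components of the two zero conditions
  have e11 : s₁*t₁*a₁ + (1-s₁)*t₁*a₂ + (1-s₁)*(1-t₁)*a₃ + s₁*(1-t₁)*a₄ = 0 := by
    have := congrArg Prod.fst hG₁
    simp only [Gmap, Prod.smul_mk, Prod.mk_add_mk, smul_eq_mul, Prod.fst_zero] at this
    linear_combination this
  have e12 : s₁*t₁*b₁ + (1-s₁)*t₁*b₂ + (1-s₁)*(1-t₁)*b₃ + s₁*(1-t₁)*b₄ = 0 := by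
    have := congrArg Prod.snd hG₁
    simp only [Gmap, Prod.smul_mk, Prod.mk_add_mk, smul_eq_mul, Prod.snd_zero] at this
    linear_combination this
  have e21 : s₂*t₂*a₁ + (1-s₂)*t₂*a₂ + (1-s₂)*(1-t₂)*a₃ + s₂*(1-t₂)*a₄ = 0 := by
    have := congrArg Prod.fst hG₂
    simp only [Gmap, Prod.smul_mk, Prod.mk_add_mk, smul_eq_mul, Prod.fst_zero] at this
    linear_combination this
  have e22 : s₂*t₂*b₁ + (1-s₂)*t₂*b₂ + (1-s₂)*(1-t₂)*b₃ + s₂*(1-t₂)*b₄ = 0 := by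
    have := congrArg Prod.snd hG₂
    simp only [Gmap, Prod.smul_mk, Prod.mk_add_mk, smul_eq_mul, Prod.snd_zero] at this
    linear_combination this
  -- t₁ and t₂ are roots of the quadratic φ(t) = (A-B+Γ)t² + (B-2Γ)t + Γ
  have hφ₁ : (A - B + Γ)*t₁^2 + (B - 2*Γ)*t₁ + Γ = 0 := by
    have h : (1 - s₁) * ((A - B + Γ)*t₁^2 + (B - 2*Γ)*t₁ + Γ) = 0 := by
      rw [hA, hB, hΓ]
      linear_combination (t₁*a₁+(1-t₁)*a₄) * e12 - (t₁*b₁+(1-t₁)*b₄) * e11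
    rcases mul_eq_zero.mp h with h' | h'
    · exact absurd h' (by linarith)
    · exact h'
  have hφ₂ : (A - B + Γ)*t₂^2 + (B - 2*Γ)*t₂ + Γ = 0 := by
    have h : (1 - s₂) * ((A - B + Γ)*t₂^2 + (B - 2*Γ)*t₂ + Γ) = 0 := by
      rw [hA, hB, hΓ]
      linear_combination (t₂*a₁+(1-t₂)*a₄) * e22 - (t₂*b₁+(1-t₂)*b₄) * e21
    rcases mul_eq_zero.mp h with h' | h'
    · exact absurd h' (by linarith)
    · exact h'
  -- Vieta: sum of roots
  have hsum : (A - B + Γ)*(t₁ + t₂) + (B - 2*Γ) = 0 := by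
    have h : ((A - B + Γ)*(t₁ + t₂) + (B - 2*Γ)) * (t₁ - t₂) = 0 := by
      linear_combination hφ₁ - hφ₂
    rcases mul_eq_zero.mp h with h' | h'
    · exact h'
    · exact absurd (sub_eq_zero.mp h') htt
  -- the Jacobian determinant at each zero equals φ'(tⱼ)
  have hder₁ : (uvec (a₁,b₁) (a₂,b₂) (a₃,b₃) (a₄,b₄) t₁).1 * (vvec (a₁,b₁) (a₂,b₂) (a₃,b₃) (a₄,b₄) s₁).2
      - (uvec (a₁,b₁) (a₂,b₂) (a₃,b₃) (a₄,b₄) t₁).2 * (vvec (a₁,b₁) (a₂,b₂) (a₃,b₃) (a₄,b₄) s₁).1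
      = (A - B + Γ)*(t₁ - t₂) := by
    have h : (uvec (a₁,b₁) (a₂,b₂) (a₃,b₃) (a₄,b₄) t₁).1 * (vvec (a₁,b₁) (a₂,b₂) (a₃,b₃) (a₄,b₄) s₁).2
      - (uvec (a₁,b₁) (a₂,b₂) (a₃,b₃) (a₄,b₄) t₁).2 * (vvec (a₁,b₁) (a₂,b₂) (a₃,b₃) (a₄,b₄) s₁).1
      = 2*(A - B + Γ)*t₁ + (B - 2*Γ) := by
      simp only [uvec, vvec, Prod.mk_sub_mk, Prod.smul_mk, Prod.mk_add_mk, smul_eq_mul]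
      rw [hA, hB, hΓ]
      linear_combination (b₁-b₂+b₃-b₄) * e11 - (a₁-a₂+a₃-a₄) * e12
    linear_combination h + hsum
  have hder₂ : (uvec (a₁,b₁) (a₂,b₂) (a₃,b₃) (a₄,b₄) t₂).1 * (vvec (a₁,b₁) (a₂,b₂) (a₃,b₃) (a₄,b₄) s₂).2
      - (uvec (a₁,b₁) (a₂,b₂) (a₃,b₃) (a₄,b₄) t₂).2 * (vvec (a₁,b₁) (a₂,b₂) (a₃,b₃) (a₄,b₄) s₂).1
      = (A - B + Γ)*(t₂ - t₁) := by
    have h : (uvec (a₁,b₁) (a₂,b₂) (a₃,b₃) (a₄,b₄) t₂).1 * (vvec (a₁,b₁) (a₂,b₂) (a₃,b₃) (a₄,b₄) s₂).2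
      - (uvec (a₁,b₁) (a₂,b₂) (a₃,b₃) (a₄,b₄) t₂).2 * (vvec (a₁,b₁) (a₂,b₂) (a₃,b₃) (a₄,b₄) s₂).1
      = 2*(A - B + Γ)*t₂ + (B - 2*Γ) := by
      simp only [uvec, vvec, Prod.mk_sub_mk, Prod.smul_mk, Prod.mk_add_mk, smul_eq_mul]
      rw [hA, hB, hΓ]
      linear_combination (b₁-b₂+b₃-b₄) * e21 - (a₁-a₂+a₃-a₄) * e22
    linear_combination h + hsum
  -- conclude
  rintro ⟨H1, H2⟩
  have d1 := detpos_of_alleigneg M₁ H1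
  have d2 := detpos_of_alleigneg M₂ H2
  rw [hM₁, Matrix.det_fin_two_of] at d1
  rw [hM₂, Matrix.det_fin_two_of] at d2
  have hD1 : 0 < (A - B + Γ)*(t₁ - t₂) := by
    rw [← hder₁]; exact pos_aux _ _ _ _ _ _ hp₁ hq₁ d1
  have hD2 : 0 < (A - B + Γ)*(t₂ - t₁) := by
    rw [← hder₂]; exact pos_aux _ _ _ _ _ _ hp₂ hq₂ d2
  have hneg : (A - B + Γ)*(t₂ - t₁) = -((A - B + Γ)*(t₁ - t₂)) := by ring
  linarith
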